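/- Let γ(x,ξ) = (|ξ|² − (∇η(x)·ξ)²/(1+|∇η(x)|²))^{3/4}. There exists a constant c₀ > 0, depending only on d and an upper bound for ‖∇η‖_{L^∞}, such that |det Hess_ξ γ(x,ξ)| ≥ c₀ for all x ∈ ℝ^d and all ξ with 1/4 ≤ |ξ| ≤ 4. -/

import Mathlib

open RealInnerProductSpace

noncomputable section

abbrev E (d : ℕ) := EuclideanSpace ℝ (Fin d)

/-- The real inner ℝ product as a continuous bilinear map. -/
def rinner (d : ℕ) : E d →L[ℝ] E d →L[ℝ] ℝ :=
  (isBoundedBilinearMap_inner (𝕜 := ℝ) (E := E d)).toContinuousLinearMap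

@[simp] lemma rinner_apply (d : ℕ) (x y : E d) : rinner d x y = (inner ℝ x y : ℝ) := rfl

open Finset in
lemma det_aux (d : ℕ) (s Q a m : ℝ) (hs : s ≠ 0) (hQ : Q ≠ 0)
    (pc wc : Fin d → ℝ)
    (hP : ∑ i, pc i * pc i = s - 1)
    (hpw : ∑ i, pc i * wc i = m)
    (hww : ∑ i, wc i * wc i = Q - m ^ 2) :
    Matrix.det (Matrix.of fun i j : Fin d =>
        a * ((if i = j then (1:ℝ) else 0) - pc i * pc j / s) - a / (2 * Q) * (wc i * wc j))
      = a ^ d / (2 * s) := by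
  have key : (Matrix.of fun i j : Fin d =>
      a * ((if i = j then (1:ℝ) else 0) - pc i * pc j / s) - a / (2 * Q) * (wc i * wc j))
      = a • ((1 : Matrix (Fin d) (Fin d) ℝ) +
          (Matrix.of fun (i : Fin d) (k : Fin 2) => if k = 0 then pc i else wc i) *
          (Matrix.of fun (k : Fin 2) (j : Fin d) => if k = 0 then -pc j / s else -wc j / (2 * Q))) := by
    ext i j
    rcases eq_or_ne i j with h | h <;>
      · simp [Matrix.mul_apply, Matrix.one_apply, Fin.sum_univ_two, h]
        field_simp
        ring
  have S00 : ∑ j, -pc j / s * pc j = -((s-1)/s) := by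
    rw [← hP, Finset.sum_div, ← Finset.sum_neg_distrib]
    exact Finset.sum_congr rfl fun j _ => by ring
  have S01 : ∑ j, -pc j / s * wc j = -(m/s) := by
    rw [← hpw, Finset.sum_div, ← Finset.sum_neg_distrib]
    exact Finset.sum_congr rfl fun j _ => by ring
  have S10 : ∑ j, -wc j / (2*Q) * pc j = -(m/(2*Q)) := by
    rw [← hpw, Finset.sum_div, ← Finset.sum_neg_distrib]
    exact Finset.sum_congr rfl fun j _ => by ring
  have S11 : ∑ j, -wc j / (2*Q) * wc j = -((Q - m^2)/(2*Q)) := by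
    rw [← hww, Finset.sum_div, ← Finset.sum_neg_distrib]
    exact Finset.sum_congr rfl fun j _ => by ring
  rw [key, Matrix.det_smul, Matrix.det_one_add_mul_comm]
  have h2 : ((Matrix.of fun (k : Fin 2) (j : Fin d) => if k = 0 then -pc j / s else -wc j / (2 * Q)) *
      (Matrix.of fun (i : Fin d) (k : Fin 2) => if k = 0 then pc i else wc i)) =
      Matrix.of ![![-((s-1)/s), -(m/s)], ![-(m/(2*Q)), -((Q - m^2)/(2*Q))]] := by
    ext k l
    fin_cases k <;> fin_cases l <;>
      simpa [Matrix.mul_apply] using (by assumption : _)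
  rw [h2]
  have h3 : ((1 : Matrix (Fin 2) (Fin 2) ℝ) +
      Matrix.of ![![-((s-1)/s), -(m/s)], ![-(m/(2*Q)), -((Q - m^2)/(2*Q))]]).det = 1 / (2*s) := by
    rw [Matrix.det_fin_two]
    simp [Matrix.one_apply]
    field_simp
    ring
  rw [h3, Fintype.card_fin]
  ring

lemma hess_apply (d : ℕ) (p : E d) (ξ u v : E d)
    (hQξ : 0 < ‖ξ‖ ^ 2 - (inner ℝ p ξ : ℝ) ^ 2 / (1 + ‖p‖ ^ 2)) :
    iteratedFDeriv ℝ 2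
        (fun ζ : E d => (‖ζ‖ ^ 2 - (inner ℝ p ζ : ℝ) ^ 2 / (1 + ‖p‖ ^ 2)) ^ (3 / 4 : ℝ)) ξ ![u, v]
      = (3/2) * (‖ξ‖ ^ 2 - (inner ℝ p ξ : ℝ) ^ 2 / (1 + ‖p‖ ^ 2)) ^ (-(1/4) : ℝ) *
          ((inner ℝ u v : ℝ) - (inner ℝ p u : ℝ) * (inner ℝ p v : ℝ) / (1 + ‖p‖ ^ 2))
        - (3/4) * (‖ξ‖ ^ 2 - (inner ℝ p ξ : ℝ) ^ 2 / (1 + ‖p‖ ^ 2)) ^ (-(5/4) : ℝ) *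
          ((inner ℝ ξ u : ℝ) - (inner ℝ p ξ : ℝ) * (inner ℝ p u : ℝ) / (1 + ‖p‖ ^ 2)) *
          ((inner ℝ ξ v : ℝ) - (inner ℝ p ξ : ℝ) * (inner ℝ p v : ℝ) / (1 + ‖p‖ ^ 2)) := by
  set s : ℝ := 1 + ‖p‖ ^ 2 with hs_def
  have hs : (0:ℝ) < s := by positivity
  set Q : E d → ℝ := fun ζ => ‖ζ‖ ^ 2 - (inner ℝ p ζ : ℝ) ^ 2 / s with hQ_def
  set N : E d →L[ℝ] (E d →L[ℝ] ℝ) :=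
    (2:ℝ) • (rinner d) - (2/s) • ((rinner d p).smulRight (rinner d p)) with hN_def
  have hNapp : ∀ ζ w : E d,
      N ζ w = 2 * (inner ℝ ζ w : ℝ) - (2/s) * ((inner ℝ p ζ : ℝ) * (inner ℝ p w : ℝ)) := by
    intro ζ w
    simp only [hN_def, ContinuousLinearMap.coe_sub', Pi.sub_apply, ContinuousLinearMap.smul_apply,
      ContinuousLinearMap.coe_smul', Pi.smul_apply, ContinuousLinearMap.smulRight_apply,
      rinner_apply, smul_eq_mul]
  -- Q is differentiable with derivative N ζ
  have hQd : ∀ ζ : E d, HasFDerivAt Q (N ζ) ζ := by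
    intro ζ
    have h1 : HasFDerivAt (fun ζ : E d => ‖ζ‖ ^ 2)
        (2 • (innerSL ℝ ζ).comp (ContinuousLinearMap.id ℝ (E d))) ζ :=
      (hasFDerivAt_id ζ).norm_sq
    have h2 : HasFDerivAt (fun ζ : E d => (inner ℝ p ζ : ℝ))
        (rinner d p) ζ := (rinner d p).hasFDerivAt
    have h3 : HasFDerivAt (fun ζ : E d => (inner ℝ p ζ : ℝ) * (inner ℝ p ζ : ℝ))
        ((inner ℝ p ζ : ℝ) • (rinner d p) + (inner ℝ p ζ : ℝ) • (rinner d p)) ζ := h2.mul h2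
    have h4 : HasFDerivAt (fun ζ : E d => s⁻¹ * ((inner ℝ p ζ : ℝ) * (inner ℝ p ζ : ℝ)))
        (s⁻¹ • ((inner ℝ p ζ : ℝ) • (rinner d p) + (inner ℝ p ζ : ℝ) • (rinner d p))) ζ :=
      h3.const_mul s⁻¹
    have h5 := h1.sub h4
    have hfun : Q = fun ζ : E d => ‖ζ‖ ^ 2 - s⁻¹ * ((inner ℝ p ζ : ℝ) * (inner ℝ p ζ : ℝ)) := by
      funext ζ; simp only [hQ_def]; ring
    rw [hfun]
    refine h5.congr_fderiv ?_
    ext w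
    simp only [hNapp, ContinuousLinearMap.coe_sub', Pi.sub_apply, ContinuousLinearMap.add_apply,
      ContinuousLinearMap.smul_apply, ContinuousLinearMap.coe_smul', Pi.smul_apply,
      ContinuousLinearMap.coe_comp', Function.comp_apply, ContinuousLinearMap.coe_id', id_eq,
      innerSL_apply_apply, rinner_apply, smul_eq_mul, nsmul_eq_mul, Nat.cast_ofNat,
      Pi.mul_apply, Pi.ofNat_apply]
    ring
  have hQξ' : 0 < Q ξ := hQξ
  set G : E d → (E d →L[ℝ] ℝ) :=
    fun ζ => ((3/4 : ℝ) * (Q ζ) ^ ((3/4 : ℝ) - 1)) • N ζ with hG_def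
  have hfG : ∀ ζ : E d, 0 < Q ζ →
      HasFDerivAt (fun ζ : E d => (Q ζ) ^ (3/4 : ℝ)) (G ζ) ζ := by
    intro ζ hζ
    have := (Real.hasDerivAt_rpow_const (x := Q ζ) (p := (3/4:ℝ))
      (Or.inl hζ.ne')).comp_hasFDerivAt ζ (hQd ζ)
    simpa [Function.comp_def] using this
  have hQcont : Continuous Q := by
    apply Continuous.sub
    · exact (continuous_norm.pow 2)
    · exact ((Continuous.inner continuous_const continuous_id).pow 2).div_const s
  have hUopen : IsOpen {ζ : E d | 0 < Q ζ} := isOpen_lt continuous_const hQcont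
  have hmem : {ζ : E d | 0 < Q ζ} ∈ nhds ξ := hUopen.mem_nhds hQξ'
  have hfev : fderiv ℝ (fun ζ : E d => (Q ζ) ^ (3/4 : ℝ)) =ᶠ[nhds ξ] G :=
    Filter.eventuallyEq_of_mem hmem fun ζ hζ => (hfG ζ hζ).fderiv
  -- derivative of the scalar factor
  have hh : HasFDerivAt (fun ζ : E d => (3/4 : ℝ) * (Q ζ) ^ ((3/4 : ℝ) - 1))
      ((3/4 : ℝ) • ((((3/4:ℝ) - 1) * (Q ξ) ^ ((3/4:ℝ) - 1 - 1)) • N ξ)) ξ := by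
    have := (Real.hasDerivAt_rpow_const (x := Q ξ) (p := (3/4:ℝ) - 1)
      (Or.inl hQξ'.ne')).comp_hasFDerivAt ξ (hQd ξ)
    have := this.const_mul (3/4 : ℝ)
    simpa [Function.comp_def] using this
  have hG : HasFDerivAt G
      (((3/4 : ℝ) * (Q ξ) ^ ((3/4 : ℝ) - 1)) • (N : E d →L[ℝ] (E d →L[ℝ] ℝ)) +
        ((3/4 : ℝ) • ((((3/4:ℝ) - 1) * (Q ξ) ^ ((3/4:ℝ) - 1 - 1)) • N ξ)).smulRight (N ξ)) ξ :=
    hh.smul N.hasFDerivAt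
  have key : iteratedFDeriv ℝ 2 (fun ζ : E d => (Q ζ) ^ (3/4 : ℝ)) ξ ![u, v]
      = ((3/4 : ℝ) * (Q ξ) ^ ((3/4 : ℝ) - 1)) * (N u v)
        + ((3/4 : ℝ) * ((((3/4:ℝ) - 1) * (Q ξ) ^ ((3/4:ℝ) - 1 - 1)) * (N ξ u))) * (N ξ v) := by
    rw [iteratedFDeriv_two_apply, hfev.fderiv_eq, hG.fderiv]
    simp [ContinuousLinearMap.smul_apply, ContinuousLinearMap.add_apply,
      ContinuousLinearMap.smulRight_apply, smul_eq_mul]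
  have e1 : (3/4 : ℝ) - 1 = -(1/4 : ℝ) := by norm_num
  have e2 : (3/4 : ℝ) - 1 - 1 = -(5/4 : ℝ) := by norm_num
  rw [show (fun ζ : E d => (‖ζ‖ ^ 2 - (inner ℝ p ζ : ℝ) ^ 2 / s) ^ (3 / 4 : ℝ))
      = (fun ζ : E d => (Q ζ) ^ (3/4 : ℝ)) from rfl, key, e2, e1, hNapp, hNapp, hNapp]
  have : Q ξ = ‖ξ‖ ^ 2 - (inner ℝ p ξ : ℝ) ^ 2 / s := rfl
  rw [this]
  field_simp
  ring

set_option maxHeartbeats 2000000 in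
/-- Non-degeneracy of the Hessian in `ξ` of the symbol
`γ(x,ξ) = (|ξ|² − (∇η(x)·ξ)²/(1+|∇η(x)|²))^{3/4}` on the annulus `1/4 ≤ |ξ| ≤ 4`:
there is `c₀ > 0`, depending only on `d` and an upper bound `K` for `‖∇η‖_{L^∞}`, with
`|det Hess_ξ γ| ≥ c₀`. -/
theorem stmt1 (d : ℕ) (hd : 1 ≤ d) (K : ℝ) :
    ∃ c₀ > (0 : ℝ), ∀ (η : E d → ℝ), ContDiff ℝ 2 η →
      (∀ x, ‖gradient η x‖ ≤ K) →
      ∀ (γ : E d → E d → ℝ),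
      (∀ x ξ, γ x ξ =
        (‖ξ‖ ^ 2 - (inner ℝ (gradient η x) ξ : ℝ) ^ 2 / (1 + ‖gradient η x‖ ^ 2)) ^ (3 / 4 : ℝ)) →
      ∀ x ξ, 1 / 4 ≤ ‖ξ‖ → ‖ξ‖ ≤ 4 →
        c₀ ≤ |Matrix.det (Matrix.of fun i j : Fin d =>
          iteratedFDeriv ℝ 2 (fun ζ => γ x ζ) ξ
            ![EuclideanSpace.single i 1, EuclideanSpace.single j 1])| := by
  refine ⟨(3/4 : ℝ) ^ d / (2 * (1 + K ^ 2)), by positivity, ?_⟩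
  intro η hη hK γ hγ x ξ hξ1 hξ2
  set p : E d := gradient η x with hp
  have hfun : (fun ζ => γ x ζ) =
      fun ζ : E d => (‖ζ‖ ^ 2 - (inner ℝ p ζ : ℝ) ^ 2 / (1 + ‖p‖ ^ 2)) ^ (3 / 4 : ℝ) := by
    funext ζ; exact hγ x ζ
  have hs : (0:ℝ) < 1 + ‖p‖ ^ 2 := by positivity
  have hξpos : (0:ℝ) < ‖ξ‖ := lt_of_lt_of_le (by norm_num) hξ1
  have hCS : (inner ℝ p ξ : ℝ) ^ 2 ≤ ‖p‖ ^ 2 * ‖ξ‖ ^ 2 := by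
    have h := abs_real_inner_le_norm p ξ
    calc (inner ℝ p ξ : ℝ) ^ 2 = |(inner ℝ p ξ : ℝ)| ^ 2 := (sq_abs _).symm
    _ ≤ (‖p‖ * ‖ξ‖) ^ 2 := by
        apply pow_le_pow_left₀ (abs_nonneg _) h
    _ = ‖p‖ ^ 2 * ‖ξ‖ ^ 2 := by ring
  have hQ' : 0 < ‖ξ‖ ^ 2 - (inner ℝ p ξ : ℝ) ^ 2 / (1 + ‖p‖ ^ 2) := by
    have h1 : (inner ℝ p ξ : ℝ) ^ 2 / (1 + ‖p‖ ^ 2) ≤ (‖p‖ ^ 2 * ‖ξ‖ ^ 2) / (1 + ‖p‖ ^ 2) := by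
      gcongr
    have h2 : (‖p‖ ^ 2 * ‖ξ‖ ^ 2) / (1 + ‖p‖ ^ 2) < ‖ξ‖ ^ 2 := by
      rw [div_lt_iff₀ hs]
      nlinarith [sq_nonneg ‖p‖, hξpos, sq_nonneg ‖ξ‖, mul_pos hξpos hξpos]
    linarith
  -- coordinate sums
  have hip : (inner ℝ p p : ℝ) = ∑ i, p i * p i := by
    simp only [PiLp.inner_apply, RCLike.inner_apply, conj_trivial]
  have hit : (inner ℝ p ξ : ℝ) = ∑ i, p i * ξ i := by
    simp only [PiLp.inner_apply, RCLike.inner_apply, conj_trivial]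
    exact Finset.sum_congr rfl fun i _ => mul_comm _ _
  have hix : ‖ξ‖ ^ 2 = ∑ i, ξ i * ξ i := by
    rw [← real_inner_self_eq_norm_sq]
    simp only [PiLp.inner_apply, RCLike.inner_apply, conj_trivial]
  have hP : ∑ i, p i * p i = (1 + ‖p‖ ^ 2) - 1 := by
    rw [← hip, real_inner_self_eq_norm_sq]; ring
  have hpw : ∑ i, p i * (ξ i - (inner ℝ p ξ : ℝ) * p i / (1 + ‖p‖ ^ 2))
      = (inner ℝ p ξ : ℝ) / (1 + ‖p‖ ^ 2) := by
    have expand : ∑ i, p i * (ξ i - (inner ℝ p ξ : ℝ) * p i / (1 + ‖p‖ ^ 2))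
        = (∑ i, p i * ξ i) - (∑ i, p i * p i) * ((inner ℝ p ξ : ℝ) / (1 + ‖p‖ ^ 2)) := by
      rw [Finset.sum_mul, ← Finset.sum_sub_distrib]
      exact Finset.sum_congr rfl fun i _ => by ring
    rw [expand, ← hit, hP]
    field_simp
    ring
  have hww : ∑ i, (ξ i - (inner ℝ p ξ : ℝ) * p i / (1 + ‖p‖ ^ 2)) *
        (ξ i - (inner ℝ p ξ : ℝ) * p i / (1 + ‖p‖ ^ 2))
      = (‖ξ‖ ^ 2 - (inner ℝ p ξ : ℝ) ^ 2 / (1 + ‖p‖ ^ 2))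
        - ((inner ℝ p ξ : ℝ) / (1 + ‖p‖ ^ 2)) ^ 2 := by
    have expand : ∑ i, (ξ i - (inner ℝ p ξ : ℝ) * p i / (1 + ‖p‖ ^ 2)) *
          (ξ i - (inner ℝ p ξ : ℝ) * p i / (1 + ‖p‖ ^ 2))
        = (∑ i, ξ i * ξ i) - (2 * (inner ℝ p ξ : ℝ) / (1 + ‖p‖ ^ 2)) * (∑ i, p i * ξ i)
          + ((inner ℝ p ξ : ℝ) / (1 + ‖p‖ ^ 2)) ^ 2 * (∑ i, p i * p i) := by
      rw [Finset.mul_sum, Finset.mul_sum, ← Finset.sum_sub_distrib, ← Finset.sum_add_distrib]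
      exact Finset.sum_congr rfl fun i _ => by ring
    rw [expand, ← hit, hP, ← hix]
    field_simp
    ring
  -- rewrite the matrix into the algebraic normal form
  have hpowgen : ∀ X : ℝ, 0 < X → (3/4 : ℝ) * X ^ (-(5/4) : ℝ)
      = (3/2 : ℝ) * X ^ (-(1/4) : ℝ) / (2 * X) := by
    intro X hX
    rw [show (-(5/4) : ℝ) = -(1/4) + (-1) by norm_num, Real.rpow_add hX, Real.rpow_neg_one]
    field_simp
    ring
  have hpow := hpowgen (‖ξ‖ ^ 2 - (inner ℝ p ξ : ℝ) ^ 2 / (1 + ‖p‖ ^ 2)) hQ'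
  have hM : (Matrix.of fun i j : Fin d =>
        iteratedFDeriv ℝ 2 (fun ζ => γ x ζ) ξ
          ![EuclideanSpace.single i 1, EuclideanSpace.single j 1])
      = Matrix.of fun i j : Fin d =>
          ((3/2 : ℝ) * (‖ξ‖ ^ 2 - (inner ℝ p ξ : ℝ) ^ 2 / (1 + ‖p‖ ^ 2)) ^ (-(1/4) : ℝ)) *
            ((if i = j then (1:ℝ) else 0) - p i * p j / (1 + ‖p‖ ^ 2))
          - ((3/2 : ℝ) * (‖ξ‖ ^ 2 - (inner ℝ p ξ : ℝ) ^ 2 / (1 + ‖p‖ ^ 2)) ^ (-(1/4) : ℝ))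
            / (2 * (‖ξ‖ ^ 2 - (inner ℝ p ξ : ℝ) ^ 2 / (1 + ‖p‖ ^ 2))) *
            ((ξ i - (inner ℝ p ξ : ℝ) * p i / (1 + ‖p‖ ^ 2)) *
             (ξ j - (inner ℝ p ξ : ℝ) * p j / (1 + ‖p‖ ^ 2))) := by
    ext i j
    simp only [Matrix.of_apply]
    rw [hfun, hess_apply d p ξ _ _ hQ', ← hpow]
    simp only [EuclideanSpace.inner_single_left, EuclideanSpace.inner_single_right,
      EuclideanSpace.single_apply, map_one, one_mul, mul_one, conj_trivial]
    rw [show (if j = i then (1:ℝ) else 0) = if i = j then 1 else 0 from by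
      rcases eq_or_ne i j with h | h
      · simp [h]
      · simp [h, Ne.symm h]]
    ring_nf
  rw [hM, det_aux d (1 + ‖p‖ ^ 2) (‖ξ‖ ^ 2 - (inner ℝ p ξ : ℝ) ^ 2 / (1 + ‖p‖ ^ 2))
    ((3/2 : ℝ) * (‖ξ‖ ^ 2 - (inner ℝ p ξ : ℝ) ^ 2 / (1 + ‖p‖ ^ 2)) ^ (-(1/4) : ℝ))
    ((inner ℝ p ξ : ℝ) / (1 + ‖p‖ ^ 2)) hs.ne' hQ'.ne'
    (fun i => p i) (fun i => ξ i - (inner ℝ p ξ : ℝ) * p i / (1 + ‖p‖ ^ 2)) hP hpw hww]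
  -- final bounds
  have hQle : ‖ξ‖ ^ 2 - (inner ℝ p ξ : ℝ) ^ 2 / (1 + ‖p‖ ^ 2) ≤ 16 := by
    have h1 : ‖ξ‖ ^ 2 ≤ 16 := by nlinarith
    have h2 : 0 ≤ (inner ℝ p ξ : ℝ) ^ 2 / (1 + ‖p‖ ^ 2) := by positivity
    linarith
  have h16 : (16:ℝ) ^ (-(1/4) : ℝ) = 1/2 := by
    have h2 : (16:ℝ) = (2:ℝ) ^ (4:ℝ) := by
      rw [show (4:ℝ) = ((4:ℕ):ℝ) by norm_num, Real.rpow_natCast]; norm_num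
    rw [h2, ← Real.rpow_mul (by norm_num : (0:ℝ) ≤ 2),
      show (4:ℝ) * -(1/4) = -1 by norm_num, Real.rpow_neg_one]
    norm_num
  have hrpow : (1/2 : ℝ) ≤ (‖ξ‖ ^ 2 - (inner ℝ p ξ : ℝ) ^ 2 / (1 + ‖p‖ ^ 2)) ^ (-(1/4) : ℝ) := by
    rw [← h16]
    exact Real.rpow_le_rpow_of_nonpos hQ' hQle (by norm_num)
  have ha : (3/4 : ℝ) ≤ (3/2 : ℝ) * (‖ξ‖ ^ 2 - (inner ℝ p ξ : ℝ) ^ 2 / (1 + ‖p‖ ^ 2)) ^ (-(1/4) : ℝ) := by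
    linarith
  have hapow : (3/4 : ℝ) ^ d ≤
      ((3/2 : ℝ) * (‖ξ‖ ^ 2 - (inner ℝ p ξ : ℝ) ^ 2 / (1 + ‖p‖ ^ 2)) ^ (-(1/4) : ℝ)) ^ d :=
    pow_le_pow_left₀ (by norm_num) ha d
  have hsK : 1 + ‖p‖ ^ 2 ≤ 1 + K ^ 2 := by
    have h1 := hK x
    nlinarith [norm_nonneg p]
  have hfinal : (3/4 : ℝ) ^ d / (2 * (1 + K ^ 2)) ≤
      ((3/2 : ℝ) * (‖ξ‖ ^ 2 - (inner ℝ p ξ : ℝ) ^ 2 / (1 + ‖p‖ ^ 2)) ^ (-(1/4) : ℝ)) ^ d /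
        (2 * (1 + ‖p‖ ^ 2)) := by
    gcongr
  refine le_trans hfinal ?_
  exact le_abs_self _
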